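/- Let O be a discrete valuation ring with maximal ideal m, residue field k = O/m, and fraction field K, let v be the normalized (surjective, ℤ-valued) discrete valuation on K, and let D ∈ K be a uniformizer, i.e. v(D) = 1. Let F₂, F₄ ∈ O[X] be polynomials of degrees at most 2 and at most 4 respectively. Suppose there exist U, V ∈ K, a unit w ∈ O^×, and polynomials P₁, P₂ ∈ K[X] of degree at most 2 such that F₄(X) − D·F₂(X)·(U·X + V)² = w·(P₁(X)² − D·P₂(X)²) in K[X]. Then the reduction modulo m of F₂ or the reduction modulo m of F₄ is a constant times a square in k[X]; that is, there exist c ∈ k and G ∈ k[X] such that the image of F₂ in k[X] equals c·G², or there exist c ∈ k and G ∈ k[X] such that the image of F₄ in k[X] equals c·G². -/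

import Mathlib

open Polynomial

/-- In a domain, if `p` is prime and `p^(2N) ∣ Q₁² - p·Q₂²`, then `p^N` divides both. -/
lemma aux_split {R : Type*} [CommRing R] [IsDomain R] {p : R} (hp : Prime p) :
    ∀ (N : ℕ) (Q₁ Q₂ : R), p ^ (2 * N) ∣ Q₁ ^ 2 - p * Q₂ ^ 2 → p ^ N ∣ Q₁ ∧ p ^ N ∣ Q₂ := by
  intro N
  induction N with
  | zero => intro Q₁ Q₂ _; simp
  | succ N ih =>
    intro Q₁ Q₂ h
    have hp0 : p ≠ 0 := hp.ne_zero
    have h1 : p ∣ Q₁ ^ 2 := by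
      have : p ∣ Q₁ ^ 2 - p * Q₂ ^ 2 :=
        dvd_trans (dvd_pow_self p (by omega)) h
      have := dvd_add this (Dvd.intro (Q₂ ^ 2) rfl)
      simpa using this
    obtain ⟨R₁, hR₁⟩ := hp.dvd_of_dvd_pow h1
    have h2 : p ∣ Q₂ ^ 2 := by
      have hpp : p * p ∣ p * Q₂ ^ 2 := by
        have d1 : p * p ∣ Q₁ ^ 2 - p * Q₂ ^ 2 := by
          refine dvd_trans ?_ h
          have : p * p = p ^ 2 := by ring
          rw [this]
          exact pow_dvd_pow p (by omega)
        have d2 : p * p ∣ Q₁ ^ 2 := by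
          rw [hR₁]; exact ⟨R₁ ^ 2, by ring⟩
        have := dvd_sub d2 d1
        simpa using this
      exact (mul_dvd_mul_iff_left hp0).mp hpp
    obtain ⟨R₂, hR₂⟩ := hp.dvd_of_dvd_pow h2
    have hcancel : p ^ (2 * N) ∣ R₁ ^ 2 - p * R₂ ^ 2 := by
      obtain ⟨T, hT⟩ := h
      rw [hR₁, hR₂] at hT
      have e : p ^ (2 * (N + 1)) = p ^ 2 * p ^ (2 * N) := by
        rw [← pow_add]; ring_nf
      have : p ^ 2 * (R₁ ^ 2 - p * R₂ ^ 2) = p ^ 2 * (p ^ (2 * N) * T) := by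
        rw [e] at hT; linear_combination hT
      have := mul_left_cancel₀ (pow_ne_zero 2 hp0) this
      exact ⟨T, this⟩
    obtain ⟨d1, d2⟩ := ih R₁ R₂ hcancel
    constructor
    · rw [hR₁, pow_succ, mul_comm (p ^ N) p]; exact mul_dvd_mul_left p d1
    · rw [hR₂, pow_succ, mul_comm (p ^ N) p]; exact mul_dvd_mul_left p d2

/-- Over a field, if `A·L² = u·B²` with `L ≠ 0` of degree ≤ 1 and `u ≠ 0`,
then `A` is a constant times a square. -/
lemma aux_factor {k : Type*} [Field k] (A L B : k[X]) (u : k) (hu : u ≠ 0)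
    (hL : L ≠ 0) (hdeg : L.degree ≤ 1) (h : A * L ^ 2 = C u * B ^ 2) :
    ∃ c Q, A = C c * Q ^ 2 := by
  by_cases h1 : L.degree = 1
  · have hprime : Prime L := prime_of_degree_eq_one h1
    have hdvd : L ∣ C u * B ^ 2 := ⟨A * L, by linear_combination -h⟩
    have hLB : L ∣ B := by
      rcases hprime.2.2 _ _ hdvd with h' | h'
      · exact absurd (isUnit_of_dvd_unit h' ((isUnit_C).mpr (isUnit_iff_ne_zero.mpr hu)))
          hprime.not_unit
      · exact hprime.dvd_of_dvd_pow h'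
    obtain ⟨B₁, rfl⟩ := hLB
    refine ⟨u, B₁, ?_⟩
    have h2 : (A - C u * B₁ ^ 2) * L ^ 2 = 0 := by linear_combination h
    rcases mul_eq_zero.mp h2 with h' | h'
    · exact sub_eq_zero.mp h'
    · exact absurd h' (pow_ne_zero 2 hL)
  · have h0 : L.degree ≤ 0 := by
      rcases hdeg.lt_or_eq with h' | h'
      · exact Nat.WithBot.lt_one_iff_le_zero.mp h'
      · exact absurd h' h1
    obtain ⟨lc, rfl⟩ : ∃ lc, L = C lc := ⟨L.coeff 0, eq_C_of_degree_le_zero h0⟩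
    have hlc : lc ≠ 0 := fun hh => hL (by rw [hh, map_zero])
    refine ⟨u, B * C lc⁻¹, mul_right_cancel₀ (pow_ne_zero 2 hL) ?_⟩
    have hinv : C lc⁻¹ * C lc = (1 : k[X]) := by
      rw [← map_mul, inv_mul_cancel₀ hlc, map_one]
    calc A * C lc ^ 2 = C u * B ^ 2 := h
      _ = C u * (B * C lc⁻¹) ^ 2 * C lc ^ 2 := by
          linear_combination (-(C u * B ^ 2) * (C lc⁻¹ * C lc + 1)) * hinv

/-- Reduction of a polynomial over a DVR mod the maximal ideal is zero iff
the uniformizer (as a constant) divides the polynomial. -/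
lemma aux_red_zero {O : Type*} [CommRing O] [IsDomain O] [IsDiscreteValuationRing O]
    {d : O} (hd : Irreducible d) (G : O[X]) :
    G.map (Ideal.Quotient.mk (IsLocalRing.maximalIdeal O)) = 0 ↔ Polynomial.C d ∣ G := by
  rw [Polynomial.C_dvd_iff_dvd_coeff]
  constructor
  · intro h i
    have := Polynomial.ext_iff.mp h i
    rw [Polynomial.coeff_map, Polynomial.coeff_zero, Ideal.Quotient.eq_zero_iff_mem,
      hd.maximalIdeal_eq, Ideal.mem_span_singleton] at this
    exact this
  · intro h
    ext i
    rw [Polynomial.coeff_map, Polynomial.coeff_zero, Ideal.Quotient.eq_zero_iff_mem,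
      hd.maximalIdeal_eq, Ideal.mem_span_singleton]
    exact h i

theorem reduction_is_const_mul_sq {O K : Type*} [CommRing O] [IsDomain O]
    [IsDiscreteValuationRing O] [Field K] [Algebra O K] [IsFractionRing O K]
    (D : K) (hD : ∃ d : O, Irreducible d ∧ algebraMap O K d = D)
    (F2 F4 : Polynomial O) (hF2 : F2.degree ≤ 2) (hF4 : F4.degree ≤ 4)
    (U V : K) (w : Oˣ) (P1 P2 : Polynomial K) (hP1 : P1.degree ≤ 2) (hP2 : P2.degree ≤ 2)
    (heq : F4.map (algebraMap O K) -
        Polynomial.C D * F2.map (algebraMap O K) *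
          (Polynomial.C U * Polynomial.X + Polynomial.C V) ^ 2 =
      Polynomial.C (algebraMap O K (w : O)) * (P1 ^ 2 - Polynomial.C D * P2 ^ 2)) :
    (∃ (c : O ⧸ IsLocalRing.maximalIdeal O)
        (Q : Polynomial (O ⧸ IsLocalRing.maximalIdeal O)),
      F2.map (Ideal.Quotient.mk (IsLocalRing.maximalIdeal O)) = Polynomial.C c * Q ^ 2) ∨
    (∃ (c : O ⧸ IsLocalRing.maximalIdeal O)
        (Q : Polynomial (O ⧸ IsLocalRing.maximalIdeal O)),
      F4.map (Ideal.Quotient.mk (IsLocalRing.maximalIdeal O)) = Polynomial.C c * Q ^ 2) := by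
  classical
  obtain ⟨d, hd_irr, hd_map⟩ := hD
  set m := IsLocalRing.maximalIdeal O with hm
  -- trivial case: F2 reduces to zero
  by_cases hF2red : F2.map (Ideal.Quotient.mk m) = 0
  · exact Or.inl ⟨0, 0, by simp [hF2red]⟩
  -- basic setup
  have inj : Function.Injective (algebraMap O K) := IsFractionRing.injective O K
  have hp : Prime (Polynomial.C d : O[X]) :=
    Polynomial.prime_C_iff.mpr (UniqueFactorizationMonoid.irreducible_iff_prime.mp hd_irr)
  have hp0 : (Polynomial.C d : O[X]) ≠ 0 := hp.ne_zero
  have smul_eq : ∀ (a : O) (p : K[X]), a • p = C (algebraMap O K a) * p := by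
    intro a p
    rw [algebra_compatible_smul K a p, Polynomial.smul_eq_C_mul]
  -- clear denominators
  obtain ⟨b₁, hb₁⟩ := IsLocalization.integerNormalization_map_to_map (nonZeroDivisors O) P1
  obtain ⟨b₂, hb₂⟩ := IsLocalization.integerNormalization_map_to_map (nonZeroDivisors O) P2
  obtain ⟨b₃, hb₃⟩ := IsLocalization.integerNormalization_map_to_map (nonZeroDivisors O)
    (C U * X + C V)
  have hs₀ : ((b₁ : O) * b₂ * b₃ : O) ≠ 0 := by
    have := mul_mem (mul_mem b₁.2 b₂.2) b₃.2
    exact nonZeroDivisors.ne_zero this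
  obtain ⟨M, u, hs⟩ := IsDiscreteValuationRing.eq_unit_mul_pow_irreducible hs₀ hd_irr
  have huinv : ((u⁻¹ : Oˣ) : O) * (u : O) = 1 := u.inv_mul
  -- the three integral polynomials
  set r₁ : O[X] := Polynomial.C ((u⁻¹ : Oˣ) * ((b₂ : O) * b₃)) *
    IsLocalization.integerNormalization (nonZeroDivisors O) P1 with hr₁def
  set r₂ : O[X] := Polynomial.C ((u⁻¹ : Oˣ) * ((b₁ : O) * b₃)) *
    IsLocalization.integerNormalization (nonZeroDivisors O) P2 with hr₂def
  set l : O[X] := Polynomial.C ((u⁻¹ : Oˣ) * ((b₁ : O) * b₂)) *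
    IsLocalization.integerNormalization (nonZeroDivisors O) (C U * X + C V) with hldef
  have key₁ : ((u⁻¹ : Oˣ) : O) * ((b₂ : O) * b₃) * b₁ = d ^ M := by
    calc ((u⁻¹ : Oˣ) : O) * ((b₂ : O) * b₃) * b₁
        = ((u⁻¹ : Oˣ) : O) * ((b₁ : O) * b₂ * b₃) := by ring
      _ = ((u⁻¹ : Oˣ) : O) * ((u : O) * d ^ M) := by rw [hs]
      _ = d ^ M := by rw [← mul_assoc, huinv, one_mul]
  have key₂ : ((u⁻¹ : Oˣ) : O) * ((b₁ : O) * b₃) * b₂ = d ^ M := by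
    calc ((u⁻¹ : Oˣ) : O) * ((b₁ : O) * b₃) * b₂
        = ((u⁻¹ : Oˣ) : O) * ((b₁ : O) * b₂ * b₃) := by ring
      _ = ((u⁻¹ : Oˣ) : O) * ((u : O) * d ^ M) := by rw [hs]
      _ = d ^ M := by rw [← mul_assoc, huinv, one_mul]
  have key₃ : ((u⁻¹ : Oˣ) : O) * ((b₁ : O) * b₂) * b₃ = d ^ M := by
    calc ((u⁻¹ : Oˣ) : O) * ((b₁ : O) * b₂) * b₃
        = ((u⁻¹ : Oˣ) : O) * ((b₁ : O) * b₂ * b₃) := by ring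
      _ = ((u⁻¹ : Oˣ) : O) * ((u : O) * d ^ M) := by rw [hs]
      _ = d ^ M := by rw [← mul_assoc, huinv, one_mul]
  have hmr₁ : r₁.map (algebraMap O K) = C (algebraMap O K (d ^ M)) * P1 := by
    rw [hr₁def, Polynomial.map_mul, Polynomial.map_C, hb₁, smul_eq, ← mul_assoc,
      ← Polynomial.C_mul, ← map_mul, key₁]
  have hmr₂ : r₂.map (algebraMap O K) = C (algebraMap O K (d ^ M)) * P2 := by
    rw [hr₂def, Polynomial.map_mul, Polynomial.map_C, hb₂, smul_eq, ← mul_assoc,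
      ← Polynomial.C_mul, ← map_mul, key₂]
  have hml : l.map (algebraMap O K) = C (algebraMap O K (d ^ M)) * (C U * X + C V) := by
    rw [hldef, Polynomial.map_mul, Polynomial.map_C, hb₃, smul_eq, ← mul_assoc,
      ← Polynomial.C_mul, ← map_mul, key₃]
  -- degree of l
  have hdegl : l.degree ≤ 1 := by
    rw [← Polynomial.degree_map_eq_of_injective inj l, hml]
    refine le_trans (Polynomial.degree_mul_le _ _) ?_
    have h1 : (C (algebraMap O K (d ^ M))).degree ≤ 0 := Polynomial.degree_C_le
    have h2 : (C U * X + C V).degree ≤ 1 := Polynomial.degree_linear_le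
    calc (C (algebraMap O K (d ^ M))).degree + (C U * X + C V).degree
        ≤ 0 + 1 := add_le_add h1 h2
      _ = 1 := by simp
  -- the main equation over O
  have hE : Polynomial.C d ^ (2 * M) * F4 - Polynomial.C d * F2 * l ^ 2 =
      Polynomial.C (w : O) * (r₁ ^ 2 - Polynomial.C d * r₂ ^ 2) := by
    apply Polynomial.map_injective (algebraMap O K) inj
    simp only [Polynomial.map_sub, Polynomial.map_mul, Polynomial.map_pow, Polynomial.map_C,
      hmr₁, hmr₂, hml, map_pow, hd_map]
    linear_combination (Polynomial.C D ^ M) ^ 2 * heq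
  clear heq hb₁ hb₂ hb₃ hs
  set p : O[X] := Polynomial.C d with hpdef
  have hφp : p.map (Ideal.Quotient.mk m) = 0 := by
    rw [hpdef, Polynomial.map_C]
    have : Ideal.Quotient.mk m d = 0 := by
      rw [Ideal.Quotient.eq_zero_iff_mem, hm, hd_irr.maximalIdeal_eq,
        Ideal.mem_span_singleton]
    rw [this, Polynomial.C_0]
  by_cases hcase : p ^ (2 * M + 1) ∣ p * F2 * l ^ 2
  · -- Case I : conclude about F4
    have hdvd : p ^ (2 * M) ∣ Polynomial.C (w : O) * (r₁ ^ 2 - p * r₂ ^ 2) := by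
      rw [← hE]
      exact dvd_sub (Dvd.intro _ rfl) (dvd_trans (pow_dvd_pow p (by omega)) hcase)
    have hww : (Polynomial.C ((w⁻¹ : Oˣ) : O) : O[X]) * Polynomial.C (w : O) = 1 := by
      rw [← Polynomial.C_mul, w.inv_mul, Polynomial.C_1]
    have hdvd2 : p ^ (2 * M) ∣ r₁ ^ 2 - p * r₂ ^ 2 := by
      have h' := hdvd.mul_left (Polynomial.C ((w⁻¹ : Oˣ) : O))
      rwa [← mul_assoc, hww, one_mul] at h'
    obtain ⟨hq1, hq2⟩ := aux_split hp M r₁ r₂ hdvd2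
    obtain ⟨R₁, hR₁⟩ := hq1
    obtain ⟨R₂, hR₂⟩ := hq2
    obtain ⟨T, hT⟩ := hcase
    rw [hR₁, hR₂] at hE
    rw [mul_assoc p F2 (l ^ 2)] at hE
    -- hT : p * F2 * l^2 = p^(2M+1) * T ; hE uses p * (F2 * l^2)
    rw [mul_assoc p F2 (l ^ 2)] at hT
    rw [hT] at hE
    have e2 : p ^ (2 * M) * F4 =
        p ^ (2 * M) * (p * T + Polynomial.C (w : O) * R₁ ^ 2 -
          p * (Polynomial.C (w : O) * R₂ ^ 2)) := by
      linear_combination hE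
    have hF4eq := mul_left_cancel₀ (pow_ne_zero _ hp0) e2
    refine Or.inr ⟨Ideal.Quotient.mk m (w : O), R₁.map (Ideal.Quotient.mk m), ?_⟩
    rw [hF4eq]
    simp [Polynomial.map_add, Polynomial.map_sub, Polynomial.map_mul, Polynomial.map_pow,
      hφp, Polynomial.map_C]
  · -- Case II : conclude about F2
    have hl0 : l ≠ 0 := by
      intro h
      exact hcase (by rw [h]; simp)
    obtain ⟨c, l', hl'nd, hl'⟩ := WfDvdMonoid.max_power_factor hl0 hp.irreducible
    have hc : 2 * c + 1 ≤ 2 * M := by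
      by_contra h'
      apply hcase
      rw [hl']
      have e : p * F2 * (p ^ c * l') ^ 2 = p ^ (2 * c + 1) * (F2 * l' ^ 2) := by ring
      rw [e]
      exact (pow_dvd_pow p (by omega)).mul_right _
    have hce : 2 * c + 1 ≤ 2 * M - 1 := by omega
    have hdvd : p ^ (2 * c + 1) ∣ Polynomial.C (w : O) * (r₁ ^ 2 - p * r₂ ^ 2) := by
      rw [← hE, hl']
      refine dvd_sub (dvd_trans (pow_dvd_pow p (by omega)) (Dvd.intro _ rfl)) ?_
      have e : p * F2 * (p ^ c * l') ^ 2 = p ^ (2 * c + 1) * (F2 * l' ^ 2) := by ring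
      rw [e]
      exact Dvd.intro _ rfl
    have hww : (Polynomial.C ((w⁻¹ : Oˣ) : O) : O[X]) * Polynomial.C (w : O) = 1 := by
      rw [← Polynomial.C_mul, w.inv_mul, Polynomial.C_1]
    have hdvd2 : p ^ (2 * c + 1) ∣ r₁ ^ 2 - p * r₂ ^ 2 := by
      have h' := hdvd.mul_left (Polynomial.C ((w⁻¹ : Oˣ) : O))
      rwa [← mul_assoc, hww, one_mul] at h'
    obtain ⟨hq1, hq2⟩ := aux_split hp c r₁ r₂
      (dvd_trans (pow_dvd_pow p (by omega)) hdvd2)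
    obtain ⟨s₁, hs₁⟩ := hq1
    obtain ⟨s₂, hs₂⟩ := hq2
    have hps₁ : p ∣ s₁ := by
      apply hp.dvd_of_dvd_pow (n := 2)
      have hd3 : p ∣ s₁ ^ 2 - p * s₂ ^ 2 := by
        obtain ⟨T, hT⟩ := hdvd2
        rw [hs₁, hs₂] at hT
        have e : p ^ (2 * c) * (s₁ ^ 2 - p * s₂ ^ 2) = p ^ (2 * c) * (p * T) := by
          have e2 : p ^ (2 * c + 1) = p ^ (2 * c) * p := by rw [pow_succ]
          rw [e2] at hT
          linear_combination hT
        exact ⟨T, mul_left_cancel₀ (pow_ne_zero _ hp0) e⟩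
      have := dvd_add hd3 (Dvd.intro (s₂ ^ 2) rfl)
      simpa using this
    obtain ⟨t₁, ht₁⟩ := hps₁
    rw [ht₁] at hs₁
    rw [hl', hs₁, hs₂] at hE
    have hMc : 2 * M = (2 * c + 1) + (2 * M - (2 * c + 1)) := by omega
    rw [hMc, pow_add] at hE
    have e2 : p ^ (2 * c + 1) * (p ^ (2 * M - (2 * c + 1)) * F4 - F2 * l' ^ 2) =
        p ^ (2 * c + 1) * (Polynomial.C (w : O) * (p * t₁ ^ 2 - s₂ ^ 2)) := by
      linear_combination hE
    have hmain := mul_left_cancel₀ (pow_ne_zero _ hp0) e2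
    have hred := congrArg (Polynomial.map (Ideal.Quotient.mk m)) hmain
    have hexp : 2 * M - (2 * c + 1) ≠ 0 := by omega
    simp only [Polynomial.map_sub, Polynomial.map_mul, Polynomial.map_pow, hφp,
      zero_pow hexp, zero_mul, Polynomial.map_C, zero_sub, mul_zero] at hred
    -- hred : -(F2.map mk * (l'.map mk)^2) = C (mk w) * (0 * _ - (s₂.map mk)^2)  (roughly)
    have heqk : (F2.map (Ideal.Quotient.mk m)) * (l'.map (Ideal.Quotient.mk m)) ^ 2 =
        Polynomial.C (Ideal.Quotient.mk m (w : O)) * (s₂.map (Ideal.Quotient.mk m)) ^ 2 := by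
      linear_combination -hred
    letI : Field (O ⧸ m) := Ideal.Quotient.field m
    have hwne : Ideal.Quotient.mk m (w : O) ≠ 0 :=
      (w.isUnit.map (Ideal.Quotient.mk m)).ne_zero
    have hl'ne : l'.map (Ideal.Quotient.mk m) ≠ 0 := by
      intro h
      exact hl'nd ((aux_red_zero hd_irr l').mp h)
    have hl'deg : (l'.map (Ideal.Quotient.mk m)).degree ≤ 1 := by
      refine le_trans (Polynomial.degree_map_le) ?_
      refine le_trans (Polynomial.degree_le_of_dvd ⟨p ^ c, by rw [hl']; ring⟩ hl0) hdegl
    obtain ⟨cc, Q, hQ⟩ := aux_factor _ _ _ _ hwne hl'ne hl'deg heqk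
    exact Or.inl ⟨cc, Q, hQ⟩
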